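/- Let X be a reflexive real Banach space and let φ, ψ : X → ℝ be continuous convex functions which are bounded below and Gateaux differentiable (with Gateaux derivatives φ'(x), ψ'(x) ∈ X*), and such that ψ(x) → +∞ as ‖x‖ → +∞. Then for every c ≤ inf_X φ and every d < inf_X ψ there exists x̃ ∈ X such that (φ(x̃) − c)·φ'(x̃) + (ψ(x̃) − d)·ψ'(x̃) = 0 in X*. -/

import Mathlib

open Set Filter NormedSpace

lemma sqAux_convexOn {X : Type*} [AddCommGroup X] [Module ℝ X] {h : X → ℝ}
    (hcv : ConvexOn ℝ univ h) (hnn : ∀ x, 0 ≤ h x) :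
    ConvexOn ℝ univ (fun x => (h x) ^ 2) := by
  refine ⟨convex_univ, fun x _ y _ a b ha hb hab => ?_⟩
  have h1 := hcv.2 (mem_univ x) (mem_univ y) ha hb hab
  simp only [smul_eq_mul] at h1 ⊢
  have hx := hnn x
  have hy := hnn y
  have hz := hnn (a • x + b • y)
  nlinarith [sq_nonneg (h x - h y), mul_nonneg ha hb, mul_nonneg (mul_nonneg ha hb) (sq_nonneg (h x - h y))]

lemma sqAux_dirderiv {X : Type*} [NormedAddCommGroup X] [NormedSpace ℝ X]
    {φ : X → ℝ} (hφc : Continuous φ) (x v : X) (c L : ℝ)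
    (hφ' : Tendsto (fun t : ℝ => (φ (x + t • v) - φ x) / t) (nhdsWithin 0 {0}ᶜ) (nhds L)) :
    Tendsto (fun t : ℝ => ((φ (x + t • v) - c) ^ 2 - (φ x - c) ^ 2) / t)
      (nhdsWithin 0 {0}ᶜ) (nhds (2 * (φ x - c) * L)) := by
  have hline : Continuous fun t : ℝ => φ (x + t • v) :=
    hφc.comp (by continuity)
  have hcont : Tendsto (fun t : ℝ => φ (x + t • v)) (nhdsWithin 0 {0}ᶜ) (nhds (φ x)) := by
    have := hline.tendsto 0
    simp only [zero_smul, add_zero] at this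
    exact this.mono_left nhdsWithin_le_nhds
  have key : Tendsto (fun t : ℝ =>
      ((φ (x + t • v) - φ x) / t) * ((φ (x + t • v) - c) + (φ x - c)))
      (nhdsWithin 0 {0}ᶜ) (nhds (L * ((φ x - c) + (φ x - c)))) := by
    exact hφ'.mul ((hcont.sub tendsto_const_nhds).add tendsto_const_nhds)
  have heq : ∀ t : ℝ, ((φ (x + t • v) - c) ^ 2 - (φ x - c) ^ 2) / t =
      ((φ (x + t • v) - φ x) / t) * ((φ (x + t • v) - c) + (φ x - c)) := by
    intro t
    rw [div_mul_eq_mul_div]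
    ring_nf
  have h2 : (2 * (φ x - c) * L) = L * ((φ x - c) + (φ x - c)) := by ring
  rw [h2]
  exact key.congr (fun t => (heq t).symm)

lemma reflexiveMinAux {X : Type*} [NormedAddCommGroup X] [NormedSpace ℝ X]
    (hrefl : Function.Surjective (NormedSpace.inclusionInDoubleDual ℝ X))
    (f : X → ℝ) (hfc : Continuous f) (hfcv : ConvexOn ℝ univ f)
    (hf0 : ∀ x, 0 ≤ f x)
    (hbdd : ∃ R : ℝ, ∀ x : X, f x ≤ sInf (range f) + 1 → ‖x‖ ≤ R) :
    ∃ z : X, ∀ x : X, f z ≤ f x := by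
  classical
  obtain ⟨R, hR⟩ := hbdd
  set m := sInf (range f) with hm
  have hbb : BddBelow (range f) := ⟨0, by rintro _ ⟨x, rfl⟩; exact hf0 x⟩
  have hne : (range f).Nonempty := ⟨f 0, ⟨0, rfl⟩⟩
  -- the sublevel sets
  set K : ℕ → Set X := fun n => {x : X | f x ≤ m + 1 / (n + 1)} with hK
  have hKne : ∀ n, (K n).Nonempty := by
    intro n
    have hlt : m < m + 1 / (n + 1 : ℝ) := by
      have : (0:ℝ) < 1 / (n + 1 : ℝ) := by positivity
      linarith
    obtain ⟨_, ⟨x, rfl⟩, hx⟩ := exists_lt_of_csInf_lt hne hlt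
    exact ⟨x, hx.le⟩
  have hKconv : ∀ n, Convex ℝ (K n) := by
    intro n
    have := hfcv.convex_le (m + 1 / (n + 1 : ℝ))
    simp only [Set.sep_univ] at this
    exact this
  have hKclosed : ∀ n, IsClosed (K n) := by
    intro n
    exact isClosed_Iic.preimage hfc
  have hKsub : ∀ n, K n ⊆ Metric.closedBall (0 : X) R := by
    intro n x hx
    have h1 : (1 : ℝ) / (n + 1) ≤ 1 := by
      rw [div_le_one (by positivity)]
      simp
    have : f x ≤ m + 1 := le_trans hx (by linarith)
    simpa using hR x this
  -- move to the weak dual of the dual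
  set j : X → StrongDual ℝ (StrongDual ℝ X) := fun x => inclusionInDoubleDual ℝ X x with hj
  have hinj : Function.Injective j := fun a b hab => (inclusionInDoubleDualLi ℝ (E := X)).injective hab
  have hbij : Function.Bijective j := ⟨hinj, fun y => hrefl y⟩
  set e : X ≃ StrongDual ℝ (StrongDual ℝ X) := Equiv.ofBijective j hbij with he
  -- the inverse map, continuous from the weak-star topology to the weak topology
  set jinv : WeakDual ℝ (StrongDual ℝ X) → WeakSpace ℝ X :=
    fun x'' => toWeakSpace ℝ X (e.symm x'') with hjinv
  have hjinvc : Continuous jinv := by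
    apply WeakBilin.continuous_of_continuous_eval
    intro g
    have hval : ∀ x'' : WeakDual ℝ (StrongDual ℝ X),
        (topDualPairing ℝ X).flip (toWeakSpace ℝ X (e.symm x'')) g = x'' g := by
      intro x''
      have h1 : j (e.symm x'') = x'' := e.apply_symm_apply x''
      calc (topDualPairing ℝ X).flip (toWeakSpace ℝ X (e.symm x'')) g
          = g (e.symm x'') := rfl
        _ = j (e.symm x'') g := rfl
        _ = x'' g := by rw [h1]; rfl
    have := WeakDual.eval_continuous (𝕜 := ℝ) (E := StrongDual ℝ X) g
    exact this.congr (fun x'' => (hval x'').symm)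
  -- images of the sublevel sets
  set C : ℕ → Set (WeakDual ℝ (StrongDual ℝ X)) := fun n => (fun x : X => (j x : WeakDual ℝ (StrongDual ℝ X))) '' K n with hC
  have hCim : ∀ n, C n = jinv ⁻¹' (toWeakSpace ℝ X '' K n) := by
    intro n
    ext x''
    constructor
    · rintro ⟨x, hx, rfl⟩
      refine ⟨x, hx, ?_⟩
      have : e.symm (j x) = x := e.symm_apply_apply x
      simp [hjinv, this]
    · rintro ⟨x, hx, hxe⟩
      have hx' : x = e.symm x'' := (toWeakSpace ℝ X).injective hxe
      refine ⟨x, hx, ?_⟩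
      rw [hx']
      exact e.apply_symm_apply x''
  have hCclosed : ∀ n, IsClosed (C n) := by
    intro n
    rw [hCim n]
    apply IsClosed.preimage hjinvc
    have hmaz := (hKconv n).toWeakSpace_closure (𝕜 := ℝ)
    rw [(hKclosed n).closure_eq] at hmaz
    rw [hmaz]
    exact isClosed_closure
  have hCcpt : ∀ n, IsCompact (C n) := by
    intro n
    refine (WeakDual.isCompact_closedBall (𝕜 := ℝ) (E := StrongDual ℝ X) 0 R).of_isClosed_subset
      (hCclosed n) ?_
    rintro _ ⟨x, hx, rfl⟩
    have hxR : ‖x‖ ≤ R := by simpa using hKsub n hx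
    have : ‖j x‖ ≤ ‖x‖ := double_dual_bound ℝ X x
    simp only [Set.mem_preimage, Metric.mem_closedBall, dist_zero_right]
    exact (mem_closedBall_zero_iff (a := (j x : StrongDual ℝ (StrongDual ℝ X)))).mpr (le_trans this hxR)
  have hCne : ∀ n, (C n).Nonempty := fun n => (hKne n).image _
  have hmono : Antitone C := by
    intro p q hpq
    apply Set.image_mono
    intro x hx
    have hcast : (p:ℝ) + 1 ≤ (q:ℝ) + 1 := by exact_mod_cast Nat.succ_le_succ hpq
    have hdiv : (1:ℝ) / (q + 1) ≤ 1 / (p + 1) := one_div_le_one_div_of_le (by positivity) hcast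
    have hx' : f x ≤ m + 1 / (q + 1) := hx
    show f x ≤ m + 1 / (p + 1)
    linarith
  have hnonempty : (⋂ n, C n).Nonempty :=
    IsCompact.nonempty_iInter_of_directed_nonempty_isCompact_isClosed C
      hmono.directed_ge hCne hCcpt hCclosed
  obtain ⟨x'', hx''⟩ := hnonempty
  obtain ⟨z, hz0, hz⟩ := (Set.mem_iInter.mp hx'') 0
  refine ⟨z, fun x => ?_⟩
  have hzlevel : ∀ n : ℕ, f z ≤ m + 1 / (n + 1) := by
    intro n
    obtain ⟨y, hy, hyz⟩ := (Set.mem_iInter.mp hx'') n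
    have hyz' : y = z := hinj (hyz.trans hz.symm)
    rwa [hyz'] at hy
  have hzm : f z ≤ m := by
    by_contra hcon
    push_neg at hcon
    obtain ⟨n, hn⟩ := exists_nat_one_div_lt (show (0:ℝ) < f z - m by linarith)
    have h2 := hzlevel n
    linarith
  exact le_trans hzm (csInf_le hbb ⟨x, rfl⟩)

/-- Corollary 3.2: X reflexive real Banach space, φ, ψ convex, bounded below,
Gateaux differentiable, ψ coercive.  Then for every c ≤ inf φ and d < inf ψ
there is x̃ with (φ(x̃) - c)φ'(x̃) + (ψ(x̃) - d)ψ'(x̃) = 0. -/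
theorem stmt9
    {X : Type*} [NormedAddCommGroup X] [NormedSpace ℝ X] [CompleteSpace X]
    (hrefl : Function.Surjective (NormedSpace.inclusionInDoubleDual ℝ X))
    (φ ψ : X → ℝ) (φ' ψ' : X → (X →L[ℝ] ℝ))
    (hφc : Continuous φ) (hψc : Continuous ψ)
    (hφcv : ConvexOn ℝ univ φ) (hψcv : ConvexOn ℝ univ ψ)
    (hφbd : BddBelow (range φ)) (hψbd : BddBelow (range ψ))
    (hφ' : ∀ x v : X, Tendsto (fun t : ℝ => (φ (x + t • v) - φ x) / t)
      (nhdsWithin 0 {0}ᶜ) (nhds (φ' x v)))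
    (hψ' : ∀ x v : X, Tendsto (fun t : ℝ => (ψ (x + t • v) - ψ x) / t)
      (nhdsWithin 0 {0}ᶜ) (nhds (ψ' x v)))
    (hcoer : ∀ M : ℝ, ∃ R : ℝ, ∀ x : X, R ≤ ‖x‖ → M ≤ ψ x)
    (c d : ℝ) (hc : ∀ x : X, c ≤ φ x) (hd : ∃ e > d, ∀ x : X, e ≤ ψ x) :
    ∃ xt : X, (φ xt - c) • φ' xt + (ψ xt - d) • ψ' xt = 0 := by
  obtain ⟨e0, he0d, he0⟩ := hd
  set f : X → ℝ := fun x => (φ x - c) ^ 2 + (ψ x - d) ^ 2 with hfdef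
  have hφ0 : ∀ x, 0 ≤ φ x - c := fun x => sub_nonneg.2 (hc x)
  have hψ0 : ∀ x, 0 ≤ ψ x - d := fun x => by have := he0 x; linarith
  have hf0 : ∀ x, 0 ≤ f x := fun x => by positivity
  have hfc : Continuous f := by fun_prop
  have hfcv : ConvexOn ℝ univ f := by
    have h1 : ConvexOn ℝ univ (fun x => φ x - c) := hφcv.sub (concaveOn_const c convex_univ)
    have h2 : ConvexOn ℝ univ (fun x => ψ x - d) := hψcv.sub (concaveOn_const d convex_univ)
    exact (sqAux_convexOn h1 hφ0).add (sqAux_convexOn h2 hψ0)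
  have hbdd : ∃ R : ℝ, ∀ x : X, f x ≤ sInf (range f) + 1 → ‖x‖ ≤ R := by
    have hm0 : 0 ≤ sInf (range f) :=
      le_csInf ⟨f 0, ⟨0, rfl⟩⟩ (by rintro _ ⟨x, rfl⟩; exact hf0 x)
    set m := sInf (range f) with hmdef
    obtain ⟨R, hR⟩ := hcoer (d + (m + 2))
    refine ⟨max R 0, fun x hx => ?_⟩
    by_contra hcon
    push_neg at hcon
    have hxR : R ≤ ‖x‖ := le_trans (le_max_left _ _) hcon.le
    have hψx := hR x hxR
    have hfx : f x = (φ x - c) ^ 2 + (ψ x - d) ^ 2 := rfl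
    have h1 : (ψ x - d) ^ 2 ≤ f x := by nlinarith [sq_nonneg (φ x - c)]
    nlinarith [sq_nonneg (ψ x - d)]
  obtain ⟨z, hz⟩ := reflexiveMinAux hrefl f hfc hfcv hf0 hbdd
  refine ⟨z, ?_⟩
  have key : ∀ v : X, 2 * (φ z - c) * (φ' z v) + 2 * (ψ z - d) * (ψ' z v) = 0 := by
    intro v
    set L := 2 * (φ z - c) * (φ' z v) + 2 * (ψ z - d) * (ψ' z v) with hLdef
    have hder : Tendsto (fun t : ℝ => (f (z + t • v) - f z) / t)
        (nhdsWithin 0 {0}ᶜ) (nhds L) := by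
      have h1 := sqAux_dirderiv hφc z v c _ (hφ' z v)
      have h2 := sqAux_dirderiv hψc z v d _ (hψ' z v)
      have hsum := h1.add h2
      refine Tendsto.congr (fun t => ?_) hsum
      show ((φ (z + t • v) - c) ^ 2 - (φ z - c) ^ 2) / t
          + ((ψ (z + t • v) - d) ^ 2 - (ψ z - d) ^ 2) / t = (f (z + t • v) - f z) / t
      rw [hfdef]
      ring
    have hpos : 0 ≤ L := by
      have hten : Tendsto (fun t : ℝ => (f (z + t • v) - f z) / t)
          (nhdsWithin 0 (Ioi 0)) (nhds L) :=
        hder.mono_left (nhdsWithin_mono 0 (fun t ht => ne_of_gt ht))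
      refine ge_of_tendsto hten ?_
      filter_upwards [self_mem_nhdsWithin] with t ht
      exact div_nonneg (sub_nonneg.2 (hz _)) (le_of_lt ht)
    have hneg : L ≤ 0 := by
      have hten : Tendsto (fun t : ℝ => (f (z + t • v) - f z) / t)
          (nhdsWithin 0 (Iio 0)) (nhds L) :=
        hder.mono_left (nhdsWithin_mono 0 (fun t ht => ne_of_lt ht))
      refine le_of_tendsto hten ?_
      filter_upwards [self_mem_nhdsWithin] with t ht
      exact div_nonpos_of_nonneg_of_nonpos (sub_nonneg.2 (hz _)) (le_of_lt ht)
    linarith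
  apply ContinuousLinearMap.ext
  intro v
  have := key v
  simp only [ContinuousLinearMap.add_apply, ContinuousLinearMap.coe_smul',
    Pi.smul_apply, smul_eq_mul, ContinuousLinearMap.zero_apply]
  linarith
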